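/- For every integer k ≥ 2, with p_k := log₂ C(2k,k), one has 9^{2 − p_k/k} > 1 + 80/(9·p_k + 1). -/

import Mathlib

open Real


private lemma cb_sq_bound : ∀ k : ℕ, (Nat.centralBinom k)^2 * (3*k+1) ≤ 16^k := by
  intro k
  induction k with
  | zero => simp [Nat.centralBinom]
  | succ n ih =>
    have key := Nat.succ_mul_centralBinom_succ n
    have hpos : 0 < (n+1)^2 * (3*n+1) := by positivity
    apply Nat.le_of_mul_le_mul_left _ hpos
    calc (n+1)^2*(3*n+1) * ((Nat.centralBinom (n+1))^2 * (3*(n+1)+1))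
        = (3*n+1)*(3*n+4) * ((n+1) * Nat.centralBinom (n+1))^2 := by ring
      _ = (3*n+1)*(3*n+4) * (2*(2*n+1) * Nat.centralBinom n)^2 := by rw [key]
      _ = (4*(2*n+1)^2*(3*n+4)) * ((Nat.centralBinom n)^2 * (3*n+1)) := by ring
      _ ≤ (4*(2*n+1)^2*(3*n+4)) * 16^n := Nat.mul_le_mul_left _ ih
      _ ≤ (16*(n+1)^2*(3*n+1)) * 16^n := Nat.mul_le_mul_right _ (by nlinarith)
      _ = (n+1)^2*(3*n+1) * 16^(n+1) := by ring

private lemma le_logb_cert {C : ℕ} (hC : 0 < C) {a n : ℕ} (hn : 0 < n)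
    (h : 2^a ≤ C^n) : (a:ℝ)/n ≤ Real.logb 2 C := by
  have hCr : (0:ℝ) < C := by exact_mod_cast hC
  have h' : (2:ℝ)^a ≤ (C:ℝ)^n := by exact_mod_cast h
  have h2 := Real.logb_le_logb_of_le one_lt_two (by positivity) h'
  rw [Real.logb_pow, Real.logb_pow, Real.logb_self_eq_one (by norm_num)] at h2
  have hnr : (0:ℝ) < n := by exact_mod_cast hn
  rw [div_le_iff₀ hnr]
  nlinarith [h2]

private lemma logb_cert_le {C : ℕ} (hC : 0 < C) {a n : ℕ} (hn : 0 < n)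
    (h : C^n ≤ 2^a) : Real.logb 2 C ≤ (a:ℝ)/n := by
  have hCr : (0:ℝ) < C := by exact_mod_cast hC
  have h' : (C:ℝ)^n ≤ (2:ℝ)^a := by exact_mod_cast h
  have h2 := Real.logb_le_logb_of_le one_lt_two (by positivity) h'
  rw [Real.logb_pow, Real.logb_pow, Real.logb_self_eq_one (by norm_num)] at h2
  have hnr : (0:ℝ) < n := by exact_mod_cast hn
  rw [le_div_iff₀ hnr]
  nlinarith [h2]



private lemma rat_rpow_gt {R : ℝ} (hR : 0 < R) {m v : ℕ} (hv : 0 < v)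
    (h : R^v < 9^m) : R < (9:ℝ) ^ ((m:ℝ)/v) := by
  have hv' : (0:ℝ) < v := by exact_mod_cast hv
  have h1 : R = (R^v) ^ ((v:ℝ)⁻¹) := by
    rw [← Real.rpow_natCast R v, ← Real.rpow_mul hR.le, mul_inv_cancel₀ hv'.ne', Real.rpow_one]
  have h2 : (9:ℝ) ^ ((m:ℝ)/v) = ((9:ℝ)^m) ^ ((v:ℝ)⁻¹) := by
    rw [← Real.rpow_natCast 9 m, ← Real.rpow_mul (by norm_num), div_eq_mul_inv]
  rw [h1, h2]
  exact Real.rpow_lt_rpow (by positivity) h (by positivity)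

private lemma main_helper (k : ℕ) (hk : 0 < k) (pk lo : ℝ) (m v : ℕ) (hv : 0 < v)
    (hlo : lo ≤ pk) (hlo0 : 0 ≤ lo)
    (hhi : pk ≤ 2*k - k*((m:ℝ)/v))
    (hkey : (1 + 80/(9*lo+1))^v < (9:ℝ)^m) :
    (9:ℝ)^(2 - pk/k) > 1 + 80/(9*pk+1) := by
  have hk' : (0:ℝ) < k := by exact_mod_cast hk
  have hd : (0:ℝ) < 9*lo+1 := by linarith
  have hd2 : (0:ℝ) < 9*pk+1 := by linarith
  have hR : (0:ℝ) < 1 + 80/(9*lo+1) := by positivity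
  have hx : (m:ℝ)/v ≤ 2 - pk/k := by
    have h1 : pk/k ≤ (2*(k:ℝ) - k*((m:ℝ)/v))/k := by gcongr
    have h2 : (2*(k:ℝ) - k*((m:ℝ)/v))/k = 2 - (m:ℝ)/v := by field_simp
    rw [h2] at h1
    linarith
  calc 1 + 80/(9*pk+1) ≤ 1 + 80/(9*lo+1) := by gcongr
    _ < (9:ℝ)^((m:ℝ)/v) := rat_rpow_gt hR hv hkey
    _ ≤ (9:ℝ)^(2 - pk/k) := (Real.rpow_le_rpow_left_iff (by norm_num : (1:ℝ) < 9)).mpr hx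


private lemma pk_upper' (k : ℕ) (hk : 0 < k) (q : ℝ)
    (hq : q ≤ Real.logb 2 ((3*k+1 : ℕ):ℝ)) :
    Real.logb 2 (Nat.choose (2*k) k) ≤ 2*k - q/2 := by
  have hC : 0 < Nat.choose (2*k) k := Nat.choose_pos (by omega)
  have hb := cb_sq_bound k
  rw [Nat.centralBinom_eq_two_mul_choose] at hb
  set C := Nat.choose (2*k) k with hCdef
  have hCr : (0:ℝ) < C := by exact_mod_cast hC
  have hMr : (0:ℝ) < ((3*k+1 : ℕ):ℝ) := by positivity
  have hreal : ((C:ℝ))^2 * ((3*k+1 : ℕ):ℝ) ≤ (16:ℝ)^k := by exact_mod_cast hb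
  have h1 : Real.logb 2 (((C:ℝ))^2 * ((3*k+1:ℕ):ℝ)) ≤ Real.logb 2 ((16:ℝ)^k) :=
    Real.logb_le_logb_of_le one_lt_two (by positivity) hreal
  rw [Real.logb_mul (by positivity) (by positivity), Real.logb_pow, Real.logb_pow] at h1
  have h16 : Real.logb 2 (16:ℝ) = 4 := by
    rw [show (16:ℝ) = 2^(4:ℕ) by norm_num, Real.logb_pow,
      Real.logb_self_eq_one (by norm_num)]
    norm_num
  rw [h16] at h1
  -- h1 : 2 * logb 2 C + logb 2 (3k+1) ≤ k * 4
  push_cast at h1 hq ⊢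
  linarith

private lemma pk_lower' (k : ℕ) (hk : 0 < k) (r : ℝ)
    (hr : Real.logb 2 ((2*k : ℕ):ℝ) ≤ r) :
    2*k - r ≤ Real.logb 2 (Nat.choose (2*k) k) := by
  have hC : 0 < Nat.choose (2*k) k := Nat.choose_pos (by omega)
  have hb := Nat.four_pow_le_two_mul_self_mul_centralBinom k hk
  rw [Nat.centralBinom_eq_two_mul_choose] at hb
  set C := Nat.choose (2*k) k with hCdef
  have hCr : (0:ℝ) < C := by exact_mod_cast hC
  have hreal : (4:ℝ)^k ≤ ((2*k:ℕ):ℝ) * (C:ℝ) := by exact_mod_cast hb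
  have h1 : Real.logb 2 ((4:ℝ)^k) ≤ Real.logb 2 (((2*k:ℕ):ℝ) * (C:ℝ)) :=
    Real.logb_le_logb_of_le one_lt_two (by positivity) hreal
  rw [Real.logb_mul (by positivity) (by positivity), Real.logb_pow] at h1
  have h4 : Real.logb 2 (4:ℝ) = 2 := by
    rw [show (4:ℝ) = 2^(2:ℕ) by norm_num, Real.logb_pow,
      Real.logb_self_eq_one (by norm_num)]
    norm_num
  rw [h4] at h1
  push_cast at h1 hr ⊢
  linarith


/-- generic-certificate special case: `2^a ≤ (3k+1)^n`, `(2k)^n ≤ 2^b`. -/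
private lemma case_helper (k : ℕ) (hk : 0 < k) (pk : ℝ)
    (hpk : pk = Real.logb 2 (Nat.choose (2*k) k))
    (a b n : ℕ) (hn : 0 < n)
    (h1 : 2^a ≤ (3*k+1)^n) (h2 : (2*k)^n ≤ 2^b)
    (hb : (b:ℝ)/n ≤ 2*k)
    (hkey : (1 + 80/(9*(2*(k:ℝ) - b/n)+1))^(2*n*k) < (9:ℝ)^a) :
    (9:ℝ)^(2 - pk/k) > 1 + 80/(9*pk+1) := by
  have hkr : (0:ℝ) < k := by exact_mod_cast hk
  have hnr : (0:ℝ) < n := by exact_mod_cast hn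
  apply main_helper k hk pk (2*(k:ℝ) - b/n) a (2*n*k) (by positivity)
  · rw [hpk]
    exact pk_lower' k hk _ (logb_cert_le (by omega) hn h2)
  · linarith
  · rw [hpk]
    have hup := pk_upper' k hk ((a:ℝ)/n) (le_logb_cert (by omega) hn h1)
    have heq : 2*(k:ℝ) - ((a:ℝ)/n)/2 = 2*k - k*((a:ℝ)/((2*n*k:ℕ):ℝ)) := by
      push_cast
      field_simp
    linarith [heq ▸ hup]
  · exact hkey

/-- exact-value special case -/
private lemma case_helper_exact (k C : ℕ) (hk : 0 < k) (pk : ℝ)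
    (hpk : pk = Real.logb 2 (Nat.choose (2*k) k))
    (hC : Nat.choose (2*k) k = C)
    (a a' n : ℕ) (hn : 0 < n)
    (h1 : C^n ≤ 2^a)
    (h2 : 2^a' ≤ C^n)
    (ha : a ≤ 2*k*n)
    (hkey : (1 + 80/(9*((a':ℝ)/n)+1))^(k*n) < (9:ℝ)^(2*k*n - a)) :
    (9:ℝ)^(2 - pk/k) > 1 + 80/(9*pk+1) := by
  have hC0 : 0 < C := by rw [← hC]; exact Nat.choose_pos (by omega)
  have hkr : (0:ℝ) < k := by exact_mod_cast hk
  have hnr : (0:ℝ) < n := by exact_mod_cast hn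
  apply main_helper k hk pk ((a':ℝ)/n) (2*k*n - a) (k*n) (by positivity)
  · rw [hpk, hC]
    exact le_logb_cert hC0 hn h2
  · positivity
  · rw [hpk, hC]
    have hup := logb_cert_le hC0 hn h1
    have heq : ((a:ℝ))/n = 2*(k:ℝ) - k*((((2*k*n - a : ℕ)):ℝ)/((k*n:ℕ):ℝ)) := by
      have hc : (((2*k*n - a : ℕ)):ℝ) = 2*(k:ℝ)*n - a := by
        push_cast [ha]
        ring
      rw [hc]
      push_cast
      field_simp
      ring
    linarith [heq ▸ hup]
  · exact hkey


private lemma log_nine : (2.19:ℝ) ≤ Real.log 9 := by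
  rw [Real.le_log_iff_exp_le (by norm_num : (0:ℝ) < 9)]
  have e1 : Real.exp 1 ≤ 2.7182818286 := Real.exp_one_lt_d9.le
  have hp : (0:ℝ) < Real.exp (0.0475:ℝ) := Real.exp_pos _
  have h0 : Real.exp (0.0475:ℝ) ≤ 1/0.9525 := by
    have h := Real.add_one_le_exp (-(0.0475:ℝ))
    rw [Real.exp_neg] at h
    have h2 := mul_le_mul_of_nonneg_left h hp.le
    rw [mul_inv_cancel₀ hp.ne'] at h2
    rw [le_div_iff₀ (by norm_num : (0:ℝ) < 0.9525)]
    nlinarith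
  have hsplit : Real.exp (2.19:ℝ) = Real.exp 1 ^ 2 * Real.exp (0.0475:ℝ) ^ 4 := by
    rw [Real.exp_one_pow, ← Real.exp_nat_mul, ← Real.exp_add]
    norm_num
  calc Real.exp (2.19:ℝ) = Real.exp 1 ^ 2 * Real.exp (0.0475:ℝ) ^ 4 := hsplit
    _ ≤ 2.7182818286^2 * (1/0.9525)^4 := by
        apply mul_le_mul (pow_le_pow_left₀ (Real.exp_pos 1).le e1 2)
          (pow_le_pow_left₀ hp.le h0 4) (by positivity) (by positivity)
    _ ≤ 9 := by norm_num

private lemma sq_le_pow15 {k : ℕ} (hk : 15 ≤ k) : (2*k)^2 ≤ 2^k := by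
  induction k, hk using Nat.le_induction with
  | base => norm_num
  | succ n hn ih =>
    have h2 : (2*(n+1))^2 ≤ 2*(2*n)^2 := by nlinarith
    calc (2*(n+1))^2 ≤ 2*(2*n)^2 := h2
      _ ≤ 2*2^n := Nat.mul_le_mul_left _ ih
      _ = 2^(n+1) := by rw [pow_succ]; ring

private lemma generic_case (k : ℕ) (hk : 15 ≤ k) (pk : ℝ)
    (hpk : pk = Real.logb 2 (Nat.choose (2*k) k)) :
    (9:ℝ)^(2 - pk/k) > 1 + 80/(9*pk+1) := by
  have hk0 : 0 < k := by omega
  have hkr : (0:ℝ) < k := by exact_mod_cast hk0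
  have hkr15 : (15:ℝ) ≤ k := by exact_mod_cast hk
  have h46 : ((138:ℕ):ℝ)/((25:ℕ):ℝ) ≤ Real.logb 2 ((46:ℕ):ℝ) :=
    le_logb_cert (by norm_num) (by norm_num) (by norm_num)
  have h46' : Real.logb 2 ((46:ℕ):ℝ) ≤ Real.logb 2 ((3*k+1:ℕ):ℝ) := by
    apply Real.logb_le_logb_of_le one_lt_two (by norm_num)
    exact_mod_cast (by omega : (46:ℕ) ≤ 3*k+1)
  have hup : pk ≤ 2*(k:ℝ) - (69:ℝ)/25 := by
    rw [hpk]
    have h := pk_upper' k hk0 ((138:ℝ)/25) (by push_cast at h46 h46' ⊢; linarith)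
    linarith
  have hlb := pk_lower' k hk0 (((k:ℕ):ℝ)/((2:ℕ):ℝ))
    (logb_cert_le (by omega) (by norm_num) (sq_le_pow15 hk))
  have hlow : 2*(k:ℝ) - k/2 ≤ pk := by rw [hpk]; push_cast at hlb ⊢; linarith
  have hd2 : (0:ℝ) < 9*pk+1 := by nlinarith
  have hx : (69:ℝ)/25/k ≤ 2 - pk/k := by
    have h1 : pk/k ≤ (2*(k:ℝ) - 69/25)/k := by gcongr
    have he : (2*(k:ℝ) - 69/25)/k = 2 - (69:ℝ)/25/k := by field_simp
    rw [he] at h1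
    linarith
  have hxpos : (0:ℝ) ≤ 2 - pk/k := le_trans (by positivity) hx
  have hLHS : 1 + 2.19 * ((69:ℝ)/25/k) ≤ (9:ℝ)^(2 - pk/k) := by
    rw [Real.rpow_def_of_pos (by norm_num : (0:ℝ) < 9)]
    have hexp := Real.add_one_le_exp (Real.log 9 * (2 - pk/k))
    have hm : (2.19:ℝ) * ((69:ℝ)/25/k) ≤ Real.log 9 * (2 - pk/k) :=
      mul_le_mul log_nine hx (by positivity) (le_trans (by norm_num) log_nine)
    linarith
  have hRHS : 80/(9*pk+1) ≤ 80/(13.5*(k:ℝ)+1) :=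
    div_le_div_of_nonneg_left (by norm_num) (by positivity) (by nlinarith)
  have hfinal : 80/(13.5*(k:ℝ)+1) < 2.19 * ((69:ℝ)/25/k) := by
    have h1 : 2.19 * ((69:ℝ)/25/k) = ((2.19*69/25):ℝ)/k := by ring
    rw [h1, div_lt_div_iff₀ (by positivity) hkr]
    nlinarith
  linarith

/-- For every integer `k ≥ 2`, with `p_k = log₂ C(2k,k)`,
one has `9^{2−p_k/k} > 1 + 80/(9 p_k + 1)`. -/
theorem nine_power_pk_bound (k : ℕ) (hk : 2 ≤ k)
    (pk : ℝ) (hpk : pk = Real.logb 2 (Nat.choose (2 * k) k)) :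
    (9 : ℝ) ^ (2 - pk / k) > 1 + 80 / (9 * pk + 1) := by
  rcases le_or_gt 15 k with h15 | h15
  · exact generic_case k h15 pk hpk
  · interval_cases k
    · exact case_helper_exact 2 6 (by norm_num) pk hpk (by decide) 52 51 20 (by norm_num) (by norm_num) (by norm_num) (by norm_num) (by norm_num)
    · exact case_helper_exact 3 20 (by norm_num) pk hpk (by decide) 87 86 20 (by norm_num) (by norm_num) (by norm_num) (by norm_num) (by norm_num)
    · exact case_helper_exact 4 70 (by norm_num) pk hpk (by decide) 123 122 20 (by norm_num) (by norm_num) (by norm_num) (by norm_num) (by norm_num)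
    · exact case_helper 5 (by norm_num) pk hpk 80 67 20 (by norm_num) (by norm_num) (by norm_num) (by norm_num) (by norm_num)
    · exact case_helper 6 (by norm_num) pk hpk 84 72 20 (by norm_num) (by norm_num) (by norm_num) (by norm_num) (by norm_num)
    · exact case_helper 7 (by norm_num) pk hpk 89 77 20 (by norm_num) (by norm_num) (by norm_num) (by norm_num) (by rw [pow_mul]; norm_num)
    · exact case_helper 8 (by norm_num) pk hpk 92 81 20 (by norm_num) (by norm_num) (by norm_num) (by norm_num) (by rw [pow_mul]; norm_num)
    · exact case_helper 9 (by norm_num) pk hpk 96 84 20 (by norm_num) (by norm_num) (by norm_num) (by norm_num) (by rw [pow_mul]; norm_num)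
    · exact case_helper 10 (by norm_num) pk hpk 99 87 20 (by norm_num) (by norm_num) (by norm_num) (by norm_num) (by rw [pow_mul]; norm_num)
    · exact case_helper 11 (by norm_num) pk hpk 101 90 20 (by norm_num) (by norm_num) (by norm_num) (by norm_num) (by rw [pow_mul]; norm_num)
    · exact case_helper 12 (by norm_num) pk hpk 104 92 20 (by norm_num) (by norm_num) (by norm_num) (by norm_num) (by rw [pow_mul]; norm_num)
    · exact case_helper 13 (by norm_num) pk hpk 106 95 20 (by norm_num) (by norm_num) (by norm_num) (by norm_num) (by rw [pow_mul]; norm_num)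
    · exact case_helper 14 (by norm_num) pk hpk 108 97 20 (by norm_num) (by norm_num) (by norm_num) (by norm_num) (by rw [pow_mul]; norm_num)
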